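/- Let m ≥ 1 be an integer and let f = (y^m z^m − x^{2m})² y^m − x^{5m} ∈ S. Set ρ₁ = (0, 2y^{m+1}z^{m−1}, x^{2m} − 3y^m z^m) and ρ₂ = (2x^{2m}y^{m−1} − 2y^{2m−1}z^m, 10x^{3m−1} − 8x^{2m−1}y^m + 30x^{m−1}y^m z^m, 8x^{2m−1}y^{m−1}z − 45x^{m−1}y^{m−1}z^{m+1}). Then ρ₁ and ρ₂ are syzygies of f, of degrees 2m and 3m−1 respectively, and every syzygy of f can be written uniquely as g·ρ₁ + h·ρ₂ with g, h ∈ S; that is, the graded S-module AR(f) of all syzygies of f is free with basis ρ₁, ρ₂ (so the curve f = 0 is free with exponents (2m, 3m−1)). -/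

import Mathlib

open MvPolynomial

noncomputable section

abbrev P3 : Type := MvPolynomial (Fin 3) ℂ

abbrev X0 : P3 := X 0
abbrev X1 : P3 := X 1
abbrev X2 : P3 := X 2

/-- The graded piece `S_j` of `S = ℂ[x,y,z]`, with `S_j = 0` for `j < 0`. -/
def homZ (j : ℤ) : Submodule ℂ P3 :=
  if 0 ≤ j then homogeneousSubmodule (Fin 3) ℂ j.toNat else ⊥

/-- The Jacobian ideal of `f`. -/
def Jf (f : P3) : Ideal P3 :=
  Ideal.span {pderiv 0 f, pderiv 1 f, pderiv 2 f}

/-- The space of syzygies `(a,b,c) ∈ S_{q-2}³` of `f` whose divergence lies in the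
Jacobian ideal: the representatives of `E₂^{1-t,t}(f)_k`, where `q = t·d + k`. -/
def E2Z (f : P3) (q : ℤ) : Submodule ℂ (P3 × P3 × P3) where
  carrier := {v | v.1 ∈ homZ (q - 2) ∧ v.2.1 ∈ homZ (q - 2) ∧ v.2.2 ∈ homZ (q - 2) ∧
    v.1 * pderiv 0 f + v.2.1 * pderiv 1 f + v.2.2 * pderiv 2 f = 0 ∧
    pderiv 0 v.1 + pderiv 1 v.2.1 + pderiv 2 v.2.2 ∈ Jf f}
  zero_mem' := by
    exact ⟨zero_mem _, zero_mem _, zero_mem _, by simp, by simp⟩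
  add_mem' := by
    rintro a b ⟨ha1, ha2, ha3, ha4, ha5⟩ ⟨hb1, hb2, hb3, hb4, hb5⟩
    refine ⟨add_mem ha1 hb1, add_mem ha2 hb2, add_mem ha3 hb3,
      by simp only [Prod.fst_add, Prod.snd_add]; linear_combination ha4 + hb4, ?_⟩
    have h : pderiv (0 : Fin 3) (a.1 + b.1) + pderiv 1 (a.2.1 + b.2.1)
        + pderiv 2 (a.2.2 + b.2.2)
        = (pderiv 0 a.1 + pderiv 1 a.2.1 + pderiv 2 a.2.2)
          + (pderiv 0 b.1 + pderiv 1 b.2.1 + pderiv 2 b.2.2) := by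
      simp only [map_add]; ring
    simpa only [Prod.fst_add, Prod.snd_add, h] using add_mem ha5 hb5
  smul_mem' := by
    rintro c a ⟨ha1, ha2, ha3, ha4, ha5⟩
    refine ⟨Submodule.smul_mem _ c ha1, Submodule.smul_mem _ c ha2,
      Submodule.smul_mem _ c ha3, ?_, ?_⟩
    · simp only [Prod.smul_fst, Prod.smul_snd, smul_mul_assoc, ← smul_add, ha4, smul_zero]
    · have h : pderiv (0 : Fin 3) (c • a.1) + pderiv 1 (c • a.2.1) + pderiv 2 (c • a.2.2)
          = C c * (pderiv 0 a.1 + pderiv 1 a.2.1 + pderiv 2 a.2.2) := by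
        simp only [smul_eq_C_mul, pderiv_C_mul]; ring
      simpa only [Prod.smul_fst, Prod.smul_snd, h] using Ideal.mul_mem_left _ _ ha5

/-- The space of Koszul syzygies of `f` of degree `q` (i.e. `(df ∧ Ω¹)_q`),
coming from `P, Q, R ∈ S_{q-d-1}` where `d = deg f`. -/
def KZ (f : P3) (d q : ℤ) : Submodule ℂ (P3 × P3 × P3) :=
  Submodule.span ℂ {v | ∃ Pp Qq Rr : P3, Pp ∈ homZ (q - d - 1) ∧ Qq ∈ homZ (q - d - 1) ∧
    Rr ∈ homZ (q - d - 1) ∧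
    v = (Rr * pderiv 1 f - Qq * pderiv 2 f,
         Pp * pderiv 2 f - Rr * pderiv 0 f,
         Qq * pderiv 0 f - Pp * pderiv 1 f)}

/-- The term `E₂^{1-t,t}(f)_k` of the second page of Dimca's Koszul-de Rham spectral
sequence, where `q = t·d + k`: syzygies of degree `q-2` with divergence in the Jacobian
ideal, modulo Koszul syzygies. -/
abbrev E2Q (f : P3) (d q : ℤ) :=
  E2Z f q ⧸ (KZ f d q).comap (E2Z f q).subtype



-- ===== auxiliary lemmas =====

lemma prime_X_P3 (i : Fin 3) : Prime (X i : P3) := by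
  have h0 : Prime (X 0 : P3) := by
    rw [← MulEquiv.prime_iff (finSuccEquiv ℂ 2).toMulEquiv]
    have : ((finSuccEquiv ℂ 2).toMulEquiv (X 0)) = Polynomial.X := by
      simpa using finSuccEquiv_X_zero (R := ℂ) (n := 2)
    rw [this]
    exact Polynomial.prime_X
  rw [← MulEquiv.prime_iff (renameEquiv ℂ (Equiv.swap (0 : Fin 3) i)).toMulEquiv] at h0
  simpa [Equiv.swap_apply_left] using h0

abbrev uu (k : ℕ) : P3 := X1^(k+1)*X2^(k+1) - X0^(2*k+2)
abbrev ff (k : ℕ) : P3 := (uu k)^2 * X1^(k+1) - X0^(5*k+5)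
abbrev fX (k : ℕ) : P3 := -(4*(k:P3)+4) * X0^(2*k+1)*X1^(k+1)*(uu k) - (5*(k:P3)+5)*X0^(5*k+4)
abbrev fY (k : ℕ) : P3 := ((k:P3)+1) * X1^k * (uu k) * (3*X1^(k+1)*X2^(k+1) - X0^(2*k+2))
abbrev fZ (k : ℕ) : P3 := (2*(k:P3)+2) * X1^(2*k+2) * X2^k * (uu k)
abbrev s12 (k : ℕ) : P3 := 2*X1^(k+2)*X2^k
abbrev s13 (k : ℕ) : P3 := X0^(2*k+2) - 3*X1^(k+1)*X2^(k+1)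
abbrev s21 (k : ℕ) : P3 := 2*X0^(2*k+2)*X1^k - 2*X1^(2*k+1)*X2^(k+1)
abbrev s22 (k : ℕ) : P3 := 10*X0^(3*k+2) - 8*X0^(2*k+1)*X1^(k+1) + 30*X0^k*X1^(k+1)*X2^(k+1)
abbrev s23 (k : ℕ) : P3 := 8*X0^(2*k+1)*X1^k*X2 - 45*X0^k*X1^k*X2^(k+2)

lemma pd0 (k : ℕ) : pderiv 0 (ff k) = fX k := by
  simp only [ff, uu, fX, map_sub, map_add, pderiv_mul, pderiv_pow, pderiv_X_self,
    pderiv_X_of_ne (show (1:Fin 3) ≠ 0 by decide), pderiv_X_of_ne (show (2:Fin 3) ≠ 0 by decide),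
    Nat.add_sub_cancel]
  push_cast
  ring

lemma pd1 (k : ℕ) : pderiv 1 (ff k) = fY k := by
  simp only [ff, uu, fY, map_sub, map_add, pderiv_mul, pderiv_pow, pderiv_X_self,
    pderiv_X_of_ne (show (0:Fin 3) ≠ 1 by decide), pderiv_X_of_ne (show (2:Fin 3) ≠ 1 by decide),
    Nat.add_sub_cancel]
  push_cast
  ring

lemma pd2 (k : ℕ) : pderiv 2 (ff k) = fZ k := by
  simp only [ff, uu, fZ, map_sub, map_add, pderiv_mul, pderiv_pow, pderiv_X_self,
    pderiv_X_of_ne (show (0:Fin 3) ≠ 2 by decide), pderiv_X_of_ne (show (1:Fin 3) ≠ 2 by decide),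
    Nat.add_sub_cancel]
  push_cast
  ring

lemma ff_ne (k : ℕ) : ff k ≠ 0 := by
  intro h0
  have hev := congrArg (eval ![1,0,1]) h0
  simp [zero_pow (Nat.succ_ne_zero k)] at hev

lemma relF1 (k : ℕ) : IsRelPrime (ff k) X1 := by
  refine ((prime_X_P3 1).irreducible.isRelPrime_iff_not_dvd.2 ?_).symm
  rintro ⟨q, hq⟩
  have hev := congrArg (eval ![1,0,1]) hq
  simp [zero_pow (Nat.succ_ne_zero k)] at hev

lemma relF2 (k : ℕ) : IsRelPrime (ff k) X2 := by
  refine ((prime_X_P3 2).irreducible.isRelPrime_iff_not_dvd.2 ?_).symm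
  rintro ⟨q, hq⟩
  have hev := congrArg (eval ![1,2,0]) hq
  simp [zero_pow (Nat.succ_ne_zero k)] at hev
  have h2 : ((2:ℂ))^(k+1) ≠ 1 := by
    have : ((2:ℂ))^(k+1) = ((2^(k+1) : ℕ) : ℂ) := by push_cast; ring
    rw [this]
    intro h
    rw [show (1:ℂ) = ((1:ℕ):ℂ) by norm_num, Nat.cast_inj] at h
    have := Nat.one_lt_two_pow (n := k+1) (by omega)
    omega
  exact h2 (by linear_combination hev)

lemma relFu (k : ℕ) : IsRelPrime (ff k) (uu k) := by
  intro c hcf hcu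
  have hX0u : IsRelPrime (uu k) (X0^(5*k+5)) := by
    refine (((prime_X_P3 0).irreducible.isRelPrime_iff_not_dvd.2 ?_).symm).pow_right
    rintro ⟨q, hq⟩
    have hev := congrArg (eval ![0,1,1]) hq
    simp [zero_pow (show 2*k+2 ≠ 0 by omega)] at hev
  refine hX0u hcu ?_
  have : (X0:P3)^(5*k+5) = uu k * (uu k * X1^(k+1)) - ff k := by ring
  rw [this]
  exact dvd_sub (hcu.mul_right _) hcf

lemma castC (k : ℕ) (α β : ℕ) : ((α*(k:P3)+β : P3)) = C ((α:ℂ)*(k:ℂ)+(β:ℂ)) := by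
  simp [map_add, map_mul, map_natCast]

set_option maxHeartbeats 1000000 in
lemma key (k : ℕ) (a b c : P3) (hv : a * fX k + b * fY k + c * fZ k = 0) :
    ∃ g h : P3, a = h * s21 k ∧ b = g * s12 k + h * s22 k ∧ c = g * s13 k + h * s23 k := by
  have hsyz1 : 0 * fX k + s12 k * fY k + s13 k * fZ k = 0 := by ring
  have hsyz2 : s21 k * fX k + s22 k * fY k + s23 k * fZ k = 0 := by ring
  obtain ⟨D1, hD1⟩ : ∃ D : P3,
      D = a*(s22 k*X2 - s23 k*X1) - b*(s21 k*X2 - s23 k*X0) + c*(s21 k*X1 - s22 k*X0) :=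
    ⟨_, rfl⟩
  obtain ⟨D2, hD2⟩ : ∃ D : P3,
      D = 0*(b*X2 - c*X1) - s12 k*(a*X2 - c*X0) + s13 k*(a*X1 - b*X0) := ⟨_, rfl⟩
  obtain ⟨W, hW⟩ : ∃ w : P3, w = X1^(2*k+2) * (X2^k * uu k) := ⟨_, rfl⟩
  have hc2 : ((2*(k:P3)+2 : P3)) = C (2*(k:ℂ)+2) := by
    have := castC k 2 2; push_cast at this ⊢; exact this
  have h2ne : (2*(k:ℂ)+2) ≠ 0 := by
    intro h; exact Nat.cast_add_one_ne_zero (R := ℂ) k (by linear_combination h/2)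
  have hD1Fz : D1 * fZ k = ff k * ((5*(k:P3)+5) * (a * s22 k - b * s21 k)) := by
    rw [hD1]
    linear_combination (s21 k*X1 - s22 k*X0) * hv + (X0*b - X1*a) * hsyz2
  have hD2Fz : D2 * fZ k = ff k * ((5*(k:P3)+5) * (-(s12 k) * a)) := by
    rw [hD2]
    linear_combination (a*X1 - b*X0) * hsyz1 + (X0*s12 k) * hv
  have relW : IsRelPrime (ff k) (X1^(2*k+2) * (X2^k * uu k)) :=
    (relF1 k).pow_right.mul_right (((relF2 k).pow_right).mul_right (relFu k))
  have hdvd1 : ff k ∣ D1 := by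
    refine relW.dvd_of_dvd_mul_right (y := D1) ?_
    have h1 : ff k ∣ C (2*(k:ℂ)+2) * (D1 * W) :=
      ⟨(5*(k:P3)+5) * (a * s22 k - b * s21 k),
        by rw [hW]; linear_combination hD1Fz + (-(D1*(X1^(2*k+2) * (X2^k * uu k)))) * hc2⟩
    rw [(IsUnit.map (C : ℂ →+* P3) (isUnit_iff_ne_zero.2 h2ne)).dvd_mul_left, hW] at h1
    exact h1
  have hdvd2 : ff k ∣ D2 := by
    refine relW.dvd_of_dvd_mul_right (y := D2) ?_
    have h1 : ff k ∣ C (2*(k:ℂ)+2) * (D2 * W) :=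
      ⟨(5*(k:P3)+5) * (-(s12 k) * a),
        by rw [hW]; linear_combination hD2Fz + (-(D2*(X1^(2*k+2) * (X2^k * uu k)))) * hc2⟩
    rw [(IsUnit.map (C : ℂ →+* P3) (isUnit_iff_ne_zero.2 h2ne)).dvd_mul_left, hW] at h1
    exact h1
  obtain ⟨g', hg'⟩ := hdvd1
  obtain ⟨h', hh'⟩ := hdvd2
  have hca : (10*(k:P3)+10) * ff k * a
      = ((k:P3)+1) * D1 * 0 + ((k:P3)+1) * D2 * s21 k := by
    rw [hD1, hD2]; linear_combination (2*X0) * hv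
  have hcb : (10*(k:P3)+10) * ff k * b
      = ((k:P3)+1) * D1 * s12 k + ((k:P3)+1) * D2 * s22 k := by
    rw [hD1, hD2]; linear_combination (2*X1) * hv
  have hcc : (10*(k:P3)+10) * ff k * c
      = ((k:P3)+1) * D1 * s13 k + ((k:P3)+1) * D2 * s23 k := by
    rw [hD1, hD2]; linear_combination (2*X2) * hv
  have hne := ff_ne k
  have ea : (10*(k:P3)+10) * a = ((k:P3)+1) * h' * s21 k := by
    have h0 : ff k * ((10*(k:P3)+10) * a - ((k:P3)+1) * h' * s21 k) = 0 := by
      linear_combination hca + (((k:P3)+1) * s21 k) * hh'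
    have := (mul_eq_zero.mp h0).resolve_left hne
    linear_combination this
  have eb : (10*(k:P3)+10) * b = ((k:P3)+1) * g' * s12 k + ((k:P3)+1) * h' * s22 k := by
    have h0 : ff k * ((10*(k:P3)+10) * b - (((k:P3)+1) * g' * s12 k
        + ((k:P3)+1) * h' * s22 k)) = 0 := by
      linear_combination hcb + (((k:P3)+1) * s12 k) * hg' + (((k:P3)+1) * s22 k) * hh'
    have := (mul_eq_zero.mp h0).resolve_left hne
    linear_combination this
  have ec : (10*(k:P3)+10) * c = ((k:P3)+1) * g' * s13 k + ((k:P3)+1) * h' * s23 k := by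
    have h0 : ff k * ((10*(k:P3)+10) * c - (((k:P3)+1) * g' * s13 k
        + ((k:P3)+1) * h' * s23 k)) = 0 := by
      linear_combination hcc + (((k:P3)+1) * s13 k) * hg' + (((k:P3)+1) * s23 k) * hh'
    have := (mul_eq_zero.mp h0).resolve_left hne
    linear_combination this
  have h10ne : (10*(k:ℂ)+10) ≠ 0 := by
    intro h; exact Nat.cast_add_one_ne_zero (R := ℂ) k (by linear_combination h/10)
  have hCinv : (C ((10*(k:ℂ)+10)⁻¹) : P3) * (10*(k:P3)+10) = 1 := by
    have hC10 := castC k 10 10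
    push_cast at hC10
    rw [hC10, ← C_mul, inv_mul_cancel₀ h10ne, C_1]
  refine ⟨C ((10*(k:ℂ)+10)⁻¹) * (((k:P3)+1) * g'),
          C ((10*(k:ℂ)+10)⁻¹) * (((k:P3)+1) * h'), ?_, ?_, ?_⟩
  · linear_combination (C ((10*(k:ℂ)+10)⁻¹)) * ea - a * hCinv
  · linear_combination (C ((10*(k:ℂ)+10)⁻¹)) * eb - b * hCinv
  · linear_combination (C ((10*(k:ℂ)+10)⁻¹)) * ec - c * hCinv

lemma s21_ne (k : ℕ) : s21 k ≠ 0 := by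
  intro h0
  have hev := congrArg (eval ![1,1,0]) h0
  simp [zero_pow (Nat.succ_ne_zero k)] at hev

lemma s12_ne (k : ℕ) : s12 k ≠ 0 := by
  intro h0
  have hev := congrArg (eval ![1,1,1]) h0
  simp at hev

lemma hom_mono (c : ℂ) (i j l n : ℕ) (h : i + j + l = n) :
    (C c * X0^i * X1^j * X2^l : P3).IsHomogeneous n := by
  subst h
  have h0 : (X0^i : P3).IsHomogeneous i := by
    simpa using (isHomogeneous_X ℂ (0 : Fin 3)).pow i
  have h1 : (X1^j : P3).IsHomogeneous j := by
    simpa using (isHomogeneous_X ℂ (1 : Fin 3)).pow j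
  have h2 : (X2^l : P3).IsHomogeneous l := by
    simpa using (isHomogeneous_X ℂ (2 : Fin 3)).pow l
  simpa using (((isHomogeneous_C (Fin 3) c).mul h0).mul h1).mul h2

lemma hom_mono' (q : P3) (c : ℂ) (i j l n : ℕ) (hq : q = C c * X0^i * X1^j * X2^l)
    (h : i + j + l = n) : q.IsHomogeneous n := hq ▸ hom_mono c i j l n h

lemma Cnum (n : ℕ) [n.AtLeastTwo] : (OfNat.ofNat n : P3) = C (OfNat.ofNat n : ℂ) :=
  (map_ofNat _ _).symm

/-- The curve `f = (y^m z^m - x^{2m})² y^m - x^{5m}` is free with exponents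
`(2m, 3m-1)`: `ρ₁, ρ₂` are syzygies of degrees `2m` and `3m-1`, and every syzygy of
`f` is uniquely `g·ρ₁ + h·ρ₂`. -/
theorem stmt18 (m : ℕ) (hm : 1 ≤ m) (f : P3)
    (hf : f = (X1 ^ m * X2 ^ m - X0 ^ (2 * m)) ^ 2 * X1 ^ m - X0 ^ (5 * m))
    (r1 r2 : P3 × P3 × P3)
    (hr1 : r1 = (0, 2 * X1 ^ (m + 1) * X2 ^ (m - 1),
      X0 ^ (2 * m) - 3 * X1 ^ m * X2 ^ m))
    (hr2 : r2 = (2 * X0 ^ (2 * m) * X1 ^ (m - 1) - 2 * X1 ^ (2 * m - 1) * X2 ^ m,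
      10 * X0 ^ (3 * m - 1) - 8 * X0 ^ (2 * m - 1) * X1 ^ m
        + 30 * X0 ^ (m - 1) * X1 ^ m * X2 ^ m,
      8 * X0 ^ (2 * m - 1) * X1 ^ (m - 1) * X2
        - 45 * X0 ^ (m - 1) * X1 ^ (m - 1) * X2 ^ (m + 1))) :
    (r1.1.IsHomogeneous (2 * m) ∧ r1.2.1.IsHomogeneous (2 * m) ∧
      r1.2.2.IsHomogeneous (2 * m)) ∧
    (r2.1.IsHomogeneous (3 * m - 1) ∧ r2.2.1.IsHomogeneous (3 * m - 1) ∧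
      r2.2.2.IsHomogeneous (3 * m - 1)) ∧
    (r1.1 * pderiv 0 f + r1.2.1 * pderiv 1 f + r1.2.2 * pderiv 2 f = 0) ∧ (r2.1 * pderiv 0 f + r2.2.1 * pderiv 1 f + r2.2.2 * pderiv 2 f = 0) ∧
    (∀ v : P3 × P3 × P3, v.1 * pderiv 0 f + v.2.1 * pderiv 1 f + v.2.2 * pderiv 2 f = 0 →
      ∃! gh : P3 × P3, v = gh.1 • r1 + gh.2 • r2) := by
  obtain ⟨k, rfl⟩ : ∃ k, m = k + 1 := ⟨m - 1, by omega⟩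
  have hf' : f = ff k := by rw [hf]; ring
  have e1 : r1 = (0, s12 k, s13 k) := by
    rw [hr1]
    exact congrArg₂ Prod.mk rfl (congrArg₂ Prod.mk (by simp only [Nat.add_sub_cancel]; try ring)
      (by ring))
  have e2 : r2 = (s21 k, s22 k, s23 k) := by
    rw [hr2]
    simp only [show 2*(k+1)-1 = 2*k+1 by omega, show 3*(k+1)-1 = 3*k+2 by omega,
      Nat.add_sub_cancel]
    exact congrArg₂ Prod.mk (by ring) (congrArg₂ Prod.mk (by ring) (by ring))
  rw [hf', e1, e2]
  simp only [show 3*(k+1)-1 = 3*k+2 by omega]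
  refine ⟨⟨isHomogeneous_zero _ _ _, ?_, ?_⟩, ⟨?_, ?_, ?_⟩, ?_, ?_, ?_⟩
  · show (2*X1^(k+2)*X2^k : P3).IsHomogeneous (2*(k+1))
    exact hom_mono' _ 2 0 (k+2) k _ (by rw [Cnum]; try ring) (by omega)
  · show (X0^(2*k+2) - 3*X1^(k+1)*X2^(k+1) : P3).IsHomogeneous (2*(k+1))
    exact (hom_mono' _ 1 (2*k+2) 0 0 _ (by rw [C_1]; ring) (by omega)).sub
      (hom_mono' _ 3 0 (k+1) (k+1) _ (by rw [Cnum]; try ring) (by omega))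
  · show (2*X0^(2*k+2)*X1^k - 2*X1^(2*k+1)*X2^(k+1) : P3).IsHomogeneous (3*k+2)
    exact (hom_mono' _ 2 (2*k+2) k 0 _ (by rw [Cnum]; try ring) (by omega)).sub
      (hom_mono' _ 2 0 (2*k+1) (k+1) _ (by rw [Cnum]; try ring) (by omega))
  · show (10*X0^(3*k+2) - 8*X0^(2*k+1)*X1^(k+1) + 30*X0^k*X1^(k+1)*X2^(k+1) : P3).IsHomogeneous
      (3*k+2)
    exact ((hom_mono' _ 10 (3*k+2) 0 0 _ (by rw [Cnum]; try ring) (by omega)).sub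
      (hom_mono' _ 8 (2*k+1) (k+1) 0 _ (by rw [Cnum]; try ring) (by omega))).add
      (hom_mono' _ 30 k (k+1) (k+1) _ (by rw [Cnum]; try ring) (by omega))
  · show (8*X0^(2*k+1)*X1^k*X2 - 45*X0^k*X1^k*X2^(k+2) : P3).IsHomogeneous (3*k+2)
    exact (hom_mono' _ 8 (2*k+1) k 1 _ (by rw [Cnum]; try ring) (by omega)).sub
      (hom_mono' _ 45 k k (k+2) _ (by rw [Cnum]; try ring) (by omega))
  · rw [pd0, pd1, pd2]; ring
  · rw [pd0, pd1, pd2]; ring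
  · rintro ⟨a, b, c⟩ hv
    rw [pd0, pd1, pd2] at hv
    simp only at hv
    obtain ⟨g, h, ea, eb, ec⟩ := key k a b c hv
    refine ⟨(g, h), ?_, ?_⟩
    · simp only [Prod.smul_mk, smul_eq_mul, Prod.mk_add_mk, Prod.mk.injEq]
      exact ⟨by linear_combination ea, by linear_combination eb, by linear_combination ec⟩
    · rintro ⟨g1, h1⟩ hy
      simp only [Prod.smul_mk, smul_eq_mul, Prod.mk_add_mk, Prod.mk.injEq] at hy
      obtain ⟨hy1, hy2, hy3⟩ := hy
      have hh : h1 = h := by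
        refine mul_right_cancel₀ (s21_ne k) ?_
        linear_combination ea - hy1
      have hg : g1 = g := by
        refine mul_right_cancel₀ (s12_ne k) ?_
        rw [hh] at hy2
        linear_combination eb - hy2
      rw [hh, hg]


end
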